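/- arXiv:2104.15036 — 4 statements merged into one kernel-verified Lean document; each statement's English description precedes it below -/
import Mathlib

section
/- Let f : ℝ^d → ℝ be C-semi-concave (for every x there exists l ∈ ℝ^d with f(y) - f(x) ≤ l·(y-x) + C|y-x|² for all y). Suppose at a point x where f is differentiable there exists C' > 0 such that f(y) - f(x) - ∇f(x)·(y-x) ≥ -C'|y-x|² for all y ∈ ℝ^d. Then for every y and every super-gradient l_y of f at y, one has |l_y - ∇f(x)| ≤ (4C' + 2C)|y - x|. -/
open scoped RealInnerProductSpace

theorem stmt0 {d : ℕ} (C C' : ℝ) (hC' : 0 < C')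
    (f : EuclideanSpace ℝ (Fin d) → ℝ)
    (hsc : ∀ x, ∃ l, ∀ y, f y - f x ≤ ⟪l, y - x⟫ + C * ‖y - x‖ ^ 2)
    (x g : EuclideanSpace ℝ (Fin d))
    (hg : ∀ y, f y - f x ≤ ⟪g, y - x⟫ + C * ‖y - x‖ ^ 2)
    (hlow : ∀ y, f y - f x - ⟪g, y - x⟫ ≥ -C' * ‖y - x‖ ^ 2) :
    ∀ y ly, (∀ z, f z - f y ≤ ⟪ly, z - y⟫ + C * ‖z - y‖ ^ 2) →
      ‖ly - g‖ ≤ (4 * C' + 2 * C) * ‖y - x‖ := by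
  intro y ly hly
  set r := ‖y - x‖ with hrdef
  set v := g - ly with hvdef
  set s := ‖v‖ with hsdef
  have hrs : ‖ly - g‖ = s := by rw [hsdef, hvdef, norm_sub_rev]
  have hr0 : 0 ≤ r := norm_nonneg _
  have hs0 : 0 ≤ s := norm_nonneg _
  -- key inequality
  have key : ∀ z, ⟪v, z - y⟫ ≤ C' * ‖z - x‖ ^ 2 + C * r ^ 2 + C * ‖z - y‖ ^ 2 := by
    intro z
    have A := hlow z
    have B := hg y
    have D := hly z
    have e1 : ⟪g, z - x⟫ = ⟪g, z - y⟫ + ⟪g, y - x⟫ := by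
      rw [← inner_add_right, sub_add_sub_cancel]
    have e2 : ⟪v, z - y⟫ = ⟪g, z - y⟫ - ⟪ly, z - y⟫ := inner_sub_left _ _ _
    rw [e1] at A
    rw [e2]
    linarith
  -- evaluation at z = y + (t/s) • v, for s > 0, t > 0
  have eval : 0 < s → ∀ t : ℝ, 0 < t →
      t * s ≤ C' * ‖y + (t / s) • v - x‖ ^ 2 + C * r ^ 2 + C * t ^ 2 := by
    intro hs t ht
    have h1 : y + (t / s) • v - y = (t / s) • v := by abel
    have hts : 0 ≤ t / s := le_of_lt (div_pos ht hs)
    have h2 : ⟪v, (t / s) • v⟫ = (t / s) * s ^ 2 := by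
      rw [real_inner_smul_right, real_inner_self_eq_norm_sq]
    have h3 : ‖(t / s) • v‖ = t := by
      rw [norm_smul, Real.norm_eq_abs, abs_of_nonneg hts]
      field_simp
      exact hsdef.symm
    have := key (y + (t / s) • v)
    rw [h1, h2, h3] at this
    have h4 : (t / s) * s ^ 2 = t * s := by field_simp
    linarith [this, h4.symm.le, h4.le]
  rcases eq_or_lt_of_le hs0 with hs | hs
  · -- s = 0
    rcases eq_or_lt_of_le hr0 with hr | hr
    · rw [hrs, ← hs, ← hr]; ring_nf; exact le_refl _
    · -- need 4C' + 2C ≥ 0 : from hg y and hlow y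
      have B := hg y
      have A := hlow y
      have hCC : 0 ≤ C' + C := by nlinarith [pow_pos hr 2, A, B]
      rw [hrs, ← hs]
      nlinarith
  · -- s > 0
    rcases eq_or_lt_of_le hr0 with hr | hr
    ·
      have hyx : y = x := by
        have : ‖y - x‖ = 0 := hr.symm
        rwa [norm_eq_zero, sub_eq_zero] at this
      have hst : ∀ t : ℝ, 0 < t → s ≤ (C' + C) * t := by
        intro t ht
        have := eval hs t ht
        have hzx : y + (t / s) • v - x = y + (t / s) • v - y := by rw [hyx]
        rw [hzx] at this
        have h1 : y + (t / s) • v - y = (t / s) • v := by abel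
        have hts : 0 ≤ t / s := le_of_lt (div_pos ht hs)
        have h3 : ‖(t / s) • v‖ = t := by
          rw [norm_smul, Real.norm_eq_abs, abs_of_nonneg hts]
          field_simp
          exact hsdef.symm
        rw [h1, h3] at this
        rw [← hr] at this
        nlinarith
      exfalso
      rcases le_or_gt (C' + C) 0 with hcc | hcc
      · have := hst 1 one_pos
        nlinarith
      · have := hst (s / (2 * (C' + C))) (by positivity)
        have h2 : (C' + C) * (s / (2 * (C' + C))) = s / 2 := by field_simp
        rw [h2] at this
        linarith
    · -- r > 0 : take t = r
      have := eval hs r hr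
      have htri : ‖y + (r / s) • v - x‖ ≤ 2 * r := by
        have h1 : y + (r / s) • v - y = (r / s) • v := by abel
        have hts : 0 ≤ r / s := le_of_lt (div_pos hr hs)
        have h3 : ‖(r / s) • v‖ = r := by
          rw [norm_smul, Real.norm_eq_abs, abs_of_nonneg hts]
          field_simp
          exact hsdef.symm
        calc ‖y + (r / s) • v - x‖ = ‖(y + (r / s) • v - y) + (y - x)‖ := by
              congr 1; abel
          _ ≤ ‖y + (r / s) • v - y‖ + ‖y - x‖ := norm_add_le _ _
          _ = 2 * r := by rw [h1, h3]; ring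
      have hnn : 0 ≤ ‖y + (r / s) • v - x‖ := norm_nonneg _
      have hsq : ‖y + (r / s) • v - x‖ ^ 2 ≤ (2 * r) ^ 2 := by nlinarith [htri, hnn]
      rw [hrs]
      nlinarith [this, hsq, mul_pos hr hr, hC'.le, hr]
end

section
/- Let M be a symmetric positive definite d×d real matrix. Then the matrix equation S² + SM − M = 0 in symmetric matrices S is solved by S^± = ½(−M ± √(M² + 4M)), where √ denotes the positive symmetric square root of the positive definite matrix M² + 4M. Moreover S^+ = ½(−M + √(M²+4M)) is positive definite, S^+ commutes with M, and (I + M + S^+)(I + M + S^-) = I. -/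
/-- The square root of a positive semidefinite matrix, as defined in Mathlib of December 2024
(`Matrix.PosSemidef.sqrt`, since removed). -/
noncomputable def Matrix.PosSemidef.sqrt {n 𝕜 : Type*} [Fintype n] [RCLike 𝕜] [PartialOrder 𝕜] [DecidableEq n]
    {A : Matrix n n 𝕜} (hA : A.PosSemidef) : Matrix n n 𝕜 :=
  hA.1.eigenvectorUnitary.1 * Matrix.diagonal ((↑) ∘ (√·) ∘ hA.1.eigenvalues) *
  (star hA.1.eigenvectorUnitary : Matrix n n 𝕜)

open Matrix

lemma my_posdef_conj {n : Type*} [Fintype n] [DecidableEq n]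
    {D B : Matrix n n ℝ} (hD : D.PosDef) (hB : IsUnit B) : (Bᴴ * D * B).PosDef := by
  refine ⟨isHermitian_conjTranspose_mul_mul B hD.1, fun x hx => ?_⟩
  have hinj : Function.Injective (B.mulVec) := mulVec_injective_iff_isUnit.2 hB
  exact (hD.conjTranspose_mul_mul_same hinj).2 hx

theorem stmt1 {d : ℕ} (M : Matrix (Fin d) (Fin d) ℝ)
    (hM : M.PosDef)
    (hP : (M ^ 2 + (4 : ℝ) • M).PosSemidef) :
    let R := hP.sqrt
    let Sp := (1/2 : ℝ) • (-M + R)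
    let Sm := (1/2 : ℝ) • (-M - R)
    Sp.IsHermitian ∧ Sm.IsHermitian ∧
    Sp ^ 2 + Sp * M - M = 0 ∧ Sm ^ 2 + Sm * M - M = 0 ∧
    Sp.PosDef ∧ Sp * M = M * Sp ∧
    (1 + M + Sp) * (1 + M + Sm) = 1 := by
  intro R Sp Sm
  classical
  set U : Matrix (Fin d) (Fin d) ℝ := (hM.1.eigenvectorUnitary : Matrix (Fin d) (Fin d) ℝ) with hUdef
  set e : Fin d → ℝ := hM.1.eigenvalues with hedef
  have hepos : ∀ i, 0 < e i := hM.eigenvalues_pos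
  set f : Fin d → ℝ := fun i => Real.sqrt (e i ^ 2 + 4 * e i) with hfdef
  have hUU : (star U) * U = 1 := Matrix.mem_unitaryGroup_iff'.mp hM.1.eigenvectorUnitary.2
  have hUU' : U * (star U) = 1 := Matrix.mem_unitaryGroup_iff.mp hM.1.eigenvectorUnitary.2
  have hspec : M = U * Matrix.diagonal e * star U := by
    have := hM.1.spectral_theorem
    rwa [RCLike.ofReal_real_eq_id, Function.id_comp] at this
  have hdd : ∀ a b : Fin d → ℝ,
      Matrix.diagonal a * Matrix.diagonal b = Matrix.diagonal (a * b) := by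
    intro a b
    rw [Matrix.diagonal_mul_diagonal]
    rfl
  have key : ∀ a b : Fin d → ℝ,
      (U * Matrix.diagonal a * star U) * (U * Matrix.diagonal b * star U)
        = U * Matrix.diagonal (a * b) * star U := by
    intro a b
    have hcancel : ∀ X : Matrix (Fin d) (Fin d) ℝ, star U * (U * X) = X := by
      intro X; rw [← Matrix.mul_assoc, hUU, Matrix.one_mul]
    simp only [Matrix.mul_assoc]
    rw [hcancel, ← Matrix.mul_assoc (Matrix.diagonal a), hdd]
  have hadd : ∀ a b : Fin d → ℝ,
      (U * Matrix.diagonal a * star U) + (U * Matrix.diagonal b * star U)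
        = U * Matrix.diagonal (a + b) * star U := by
    intro a b
    rw [← Matrix.add_mul, ← Matrix.mul_add, Matrix.diagonal_add]
    rfl
  have hsmul : ∀ (r : ℝ) (a : Fin d → ℝ),
      r • (U * Matrix.diagonal a * star U) = U * Matrix.diagonal (r • a) * star U := by
    intro r a
    rw [Matrix.diagonal_smul, Matrix.mul_smul, Matrix.smul_mul]
  have hneg : ∀ a : Fin d → ℝ,
      -(U * Matrix.diagonal a * star U) = U * Matrix.diagonal (-a) * star U := by
    intro a
    rw [← neg_one_smul ℝ (U * Matrix.diagonal a * star U), hsmul, neg_one_smul]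
  set R₀ : Matrix (Fin d) (Fin d) ℝ := U * Matrix.diagonal f * star U with hR0def
  have hf_nonneg : ∀ i, 0 ≤ f i := fun i => Real.sqrt_nonneg _
  have hff : f * f = e * e + (4 : ℝ) • e := by
    funext i
    have h1 := hepos i
    have : f i * f i = e i ^ 2 + 4 * e i := Real.mul_self_sqrt (by nlinarith)
    simp only [Pi.mul_apply, Pi.add_apply, Pi.smul_apply, smul_eq_mul] at *
    rw [this]; ring
  have hPdiag : M ^ 2 + (4 : ℝ) • M = U * Matrix.diagonal (e * e + (4 : ℝ) • e) * star U := by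
    conv_lhs => rw [pow_two, hspec]
    rw [key, hsmul, hadd]
  have hR0sq : R₀ ^ 2 = M ^ 2 + (4 : ℝ) • M := by
    rw [pow_two, hR0def, key, hff, ← hPdiag]
  have hR0psd : R₀.PosSemidef := by
    rw [hR0def, Matrix.star_eq_conjTranspose]
    exact (Matrix.posSemidef_diagonal_iff.mpr hf_nonneg).mul_mul_conjTranspose_same U
  have hRR0 : R = R₀ := by
    have hcf : ∀ g : ℝ → ℝ, cfc g M = U * Matrix.diagonal (g ∘ e) * star U := by
      intro g
      rw [hM.1.cfc_eq]
      simp [Matrix.IsHermitian.cfc, U, e, Unitary.conjStarAlgAut_apply, Function.comp_def]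
    have h1 : R = cfc Real.sqrt (M ^ 2 + (4 : ℝ) • M) := by
      rw [hP.1.cfc_eq]
      simp [Matrix.IsHermitian.cfc, R, Matrix.PosSemidef.sqrt, Unitary.conjStarAlgAut_apply,
        Function.comp_def]
    have h2 : M ^ 2 + (4 : ℝ) • M = cfc (fun x : ℝ => x ^ 2 + 4 * x) M := by
      rw [hcf, hPdiag]
      congr 3
      funext i
      simp [Pi.mul_apply, pow_two]
    rw [h1, h2, ← cfc_comp Real.sqrt (fun x : ℝ => x ^ 2 + 4 * x) M hM.1.isSelfAdjoint, hcf, hR0def]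
    rfl
  have hRherm : R.IsHermitian := hRR0 ▸ hR0psd.1
  have hComm : R * M = M * R := by
    rw [hRR0, hR0def]
    conv_lhs => rw [hspec]
    conv_rhs => rw [hspec]
    rw [key, key, mul_comm]
  have hRsq : R * R = M * M + (4 : ℝ) • M := by
    have h : R * R = M ^ 2 + (4 : ℝ) • M := by rw [hRR0, ← pow_two, hR0sq]
    calc R * R = M ^ 2 + (4 : ℝ) • M := h
      _ = M * M + (4 : ℝ) • M := by rw [pow_two]
  have hMt : Mᵀ = M := hM.1
  have hRt : Rᵀ = R := hRherm
  have hSpH : Sp.IsHermitian := by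
    show Spᴴ = Sp
    simp [Sp, Matrix.conjTranspose_smul, Matrix.conjTranspose_add, Matrix.conjTranspose_neg,
      hMt, hRt]
  have hSmH : Sm.IsHermitian := by
    show Smᴴ = Sm
    simp [Sm, Matrix.conjTranspose_smul, Matrix.conjTranspose_sub, Matrix.conjTranspose_neg,
      hMt, hRt]
  refine ⟨hSpH, hSmH, ?_, ?_, ?_, ?_, ?_⟩
  · show ((1/2 : ℝ) • (-M + R)) ^ 2 + ((1/2 : ℝ) • (-M + R)) * M - M = 0
    rw [pow_two, smul_mul_smul_comm, Matrix.smul_mul]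
    simp only [Matrix.add_mul, Matrix.mul_add, Matrix.neg_mul, Matrix.mul_neg, neg_neg]
    rw [hComm, hRsq]
    module
  · show ((1/2 : ℝ) • (-M - R)) ^ 2 + ((1/2 : ℝ) • (-M - R)) * M - M = 0
    rw [pow_two, smul_mul_smul_comm, Matrix.smul_mul]
    simp only [Matrix.sub_mul, Matrix.mul_sub, Matrix.add_mul, Matrix.mul_add,
      Matrix.neg_mul, Matrix.mul_neg, neg_neg, sub_neg_eq_add]
    rw [hComm, hRsq]
    module
  · -- Sp PosDef
    have hdiag : Sp = U * Matrix.diagonal ((1/2 : ℝ) • (-e + f)) * star U := by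
      show (1/2 : ℝ) • (-M + R) = _
      rw [hRR0, hR0def]
      conv_lhs => rw [hspec]
      rw [hneg, hadd, hsmul]
    have hDpos : (Matrix.diagonal ((1/2 : ℝ) • (-e + f))).PosDef := by
      apply Matrix.PosDef.diagonal
      intro i
      have h1 := hepos i
      have hlt : e i < f i := by
        rw [hfdef]
        calc e i = Real.sqrt (e i ^ 2) := (Real.sqrt_sq h1.le).symm
          _ < Real.sqrt (e i ^ 2 + 4 * e i) := Real.sqrt_lt_sqrt (by positivity) (by nlinarith)
      show 0 < (1/2 : ℝ) * ((-e + f) i)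
      simp only [Pi.add_apply, Pi.neg_apply]
      linarith
    have hUnit : IsUnit (star U) := ⟨⟨star U, U, hUU, hUU'⟩, rfl⟩
    rw [hdiag, Matrix.star_eq_conjTranspose]
    have h := my_posdef_conj hDpos hUnit
    rwa [Matrix.star_eq_conjTranspose, Matrix.conjTranspose_conjTranspose] at h
  · show ((1/2 : ℝ) • (-M + R)) * M = M * ((1/2 : ℝ) • (-M + R))
    rw [Matrix.smul_mul, Matrix.mul_smul]
    rw [Matrix.add_mul, Matrix.mul_add, Matrix.neg_mul, Matrix.mul_neg, hComm]
  · show (1 + M + (1/2 : ℝ) • (-M + R)) * (1 + M + (1/2 : ℝ) • (-M - R)) = 1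
    simp only [Matrix.add_mul, Matrix.mul_add, Matrix.one_mul, Matrix.mul_one,
      Matrix.smul_mul, Matrix.mul_smul, smul_mul_smul_comm,
      Matrix.sub_mul, Matrix.mul_sub, Matrix.neg_mul, Matrix.mul_neg, neg_neg, sub_neg_eq_add]
    rw [hComm, hRsq]
    module
end

section
/- Let D_n be the nd×nd block tridiagonal symmetric matrix with diagonal blocks A₁,…,A_n (each d×d) and off-diagonal blocks −I_d. Then det D_n equals the determinant of the top-left d×d block of the product of 2×2 block matrices [[A_n, −I_d],[I_d, 0]]·[[A_{n−1}, −I_d],[I_d, 0]]⋯[[A₁, −I_d],[I_d, 0]]. -/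
open Matrix

section Aux

variable {d : ℕ} {R : Type*} [CommRing R]

def contRec (A : ℕ → Matrix (Fin d) (Fin d) R)
    (init : Matrix (Fin d) (Fin d) R × Matrix (Fin d) (Fin d) R) :
    ℕ → Matrix (Fin d) (Fin d) R × Matrix (Fin d) (Fin d) R
  | 0 => init
  | k + 1 => (A k * (contRec A init k).1 - (contRec A init k).2, (contRec A init k).1)

noncomputable def Cm (A : ℕ → Matrix (Fin d) (Fin d) R) (k : ℕ) :
    Matrix (Fin d) (Fin d) R := (contRec A (1, 0) k).1

lemma Cm_zero (A : ℕ → Matrix (Fin d) (Fin d) R) : Cm A 0 = 1 := rfl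

lemma Cm_one (A : ℕ → Matrix (Fin d) (Fin d) R) : Cm A 1 = A 0 := by
  show A 0 * 1 - 0 = A 0
  rw [mul_one, sub_zero]

lemma Cm_rec (A : ℕ → Matrix (Fin d) (Fin d) R) (k : ℕ) :
    Cm A (k + 2) = A (k + 1) * Cm A (k + 1) - Cm A k := rfl

/-- determinant of a block upper triangular matrix is the product of the diagonal blocks. -/
theorem det_blocks {n : ℕ} (Bb : Fin n → Fin n → Matrix (Fin d) (Fin d) R)
    (h : ∀ i j : Fin n, j < i → Bb i j = 0) :
    (Matrix.of fun p q : Fin n × Fin d => Bb p.1 q.1 p.2 q.2).det = ∏ i, (Bb i i).det := by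
  rcases Nat.eq_zero_or_pos d with hd | hd
  · subst hd
    haveI : IsEmpty (Fin n × Fin 0) := ⟨fun p => p.2.elim0⟩
    rw [Matrix.det_isEmpty]
    rw [Finset.prod_congr rfl (fun i _ => (Matrix.det_isEmpty (A := Bb i i)))]
    simp
  · haveI : Nonempty (Fin d) := ⟨⟨0, hd⟩⟩
    have hbt : BlockTriangular
        (Matrix.of fun p q : Fin n × Fin d => Bb p.1 q.1 p.2 q.2) Prod.fst := by
      intro p q hlt
      show Bb p.1 q.1 p.2 q.2 = 0
      rw [h p.1 q.1 hlt]
      rfl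
    rw [hbt.det]
    have himg : (Finset.univ.image (Prod.fst : Fin n × Fin d → Fin n)) = Finset.univ := by
      ext i
      simp only [Finset.mem_image, Finset.mem_univ, iff_true]
      exact ⟨(i, Classical.arbitrary _), trivial, rfl⟩
    rw [himg]
    refine Finset.prod_congr rfl fun a _ => ?_
    let e : Fin d ≃ {p : Fin n × Fin d // p.1 = a} :=
      ⟨fun x => ⟨(a, x), rfl⟩, fun p => p.1.2,
        fun x => rfl, fun p => by
          rcases p with ⟨⟨i, x⟩, hp⟩
          simp only at hp
          subst hp
          rfl⟩
    have : (Matrix.of fun p q : Fin n × Fin d => Bb p.1 q.1 p.2 q.2).toSquareBlock Prod.fst a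
        = (Bb a a).submatrix e.symm e.symm := by
      rw [Matrix.toSquareBlock_def]
      ext p q
      have hp : p.1.1 = a := p.2
      have hq : q.1.1 = a := q.2
      simp only [Matrix.of_apply, Matrix.submatrix_apply]
      rw [hp, hq]
      rfl
    rw [this, Matrix.det_submatrix_equiv_self]


def Dblk (A : ℕ → Matrix (Fin d) (Fin d) R) {n : ℕ} (i j : Fin n) :
    Matrix (Fin d) (Fin d) R :=
  if i = j then A (i : ℕ)
  else if (i : ℕ) + 1 = (j : ℕ) ∨ (j : ℕ) + 1 = (i : ℕ) then -1 else 0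

def Dmat (A : ℕ → Matrix (Fin d) (Fin d) R) (n : ℕ) :
    Matrix (Fin n × Fin d) (Fin n × Fin d) R :=
  Matrix.of fun p q => Dblk A p.1 q.1 p.2 q.2

noncomputable def Lb (A : ℕ → Matrix (Fin d) (Fin d) R) {n : ℕ} (i k : Fin n) :
    Matrix (Fin d) (Fin d) R :=
  if k = i then 1
  else if (k : ℕ) + 1 = (i : ℕ) then -(Cm A (k : ℕ) * (Cm A ((k : ℕ) + 1))⁻¹) else 0

noncomputable def Ub (A : ℕ → Matrix (Fin d) (Fin d) R) {n : ℕ} (k j : Fin n) :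
    Matrix (Fin d) (Fin d) R :=
  if j = k then Cm A ((k : ℕ) + 1) * (Cm A (k : ℕ))⁻¹
  else if (k : ℕ) + 1 = (j : ℕ) then -1 else 0

theorem LU_blk {n : ℕ} (A : ℕ → Matrix (Fin d) (Fin d) R)
    (hinv : ∀ k < n, IsUnit ((Cm A k).det)) (i j : Fin n) :
    ∑ k, Lb A i k * Ub A k j = Dblk A i j := by
  obtain ⟨iv, hi⟩ := i
  rcases iv with _ | m
  · -- first block row
    rw [Finset.sum_eq_single (⟨0, hi⟩ : Fin n)
      (fun k _ hk => by
        have h2 : ¬((k : ℕ) + 1 = ((⟨0, hi⟩ : Fin n) : ℕ)) := by simp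
        rw [Lb, if_neg hk, if_neg h2, zero_mul])
      (fun h => absurd (Finset.mem_univ _) h)]
    rw [show Lb A (⟨0, hi⟩ : Fin n) ⟨0, hi⟩ = 1 from if_pos rfl, one_mul]
    rcases eq_or_ne j ⟨0, hi⟩ with hj | hj
    · subst hj
      rw [Ub, if_pos rfl, Dblk, if_pos rfl]
      show Cm A (0 + 1) * (Cm A 0)⁻¹ = A 0
      rw [zero_add, Cm_one, Cm_zero, inv_one, mul_one]
    · rw [Ub, if_neg hj, Dblk, if_neg (Ne.symm hj)]
      by_cases h01 : ((⟨0, hi⟩ : Fin n) : ℕ) + 1 = (j : ℕ)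
      · rw [if_pos h01, if_pos (Or.inl h01)]
      · rw [if_neg h01, if_neg (by
          rintro (h | h)
          · exact h01 h
          · simp only [Fin.val_mk] at h; omega)]
  · -- block row m + 1
    have hm : m < n := Nat.lt_of_succ_lt hi
    have hne : (⟨m, hm⟩ : Fin n) ≠ ⟨m + 1, hi⟩ := Fin.ne_of_val_ne (by simp only [Fin.val_mk]; omega)
    have hsum : ∑ k, Lb A (⟨m + 1, hi⟩ : Fin n) k * Ub A k j
        = Lb A ⟨m + 1, hi⟩ ⟨m, hm⟩ * Ub A ⟨m, hm⟩ j
          + Lb A ⟨m + 1, hi⟩ ⟨m + 1, hi⟩ * Ub A ⟨m + 1, hi⟩ j := by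
      have hsub : ∀ k ∈ Finset.univ, k ∉ ({⟨m, hm⟩, ⟨m + 1, hi⟩} : Finset (Fin n)) →
          Lb A (⟨m + 1, hi⟩ : Fin n) k * Ub A k j = 0 := by
        intro k _ hk
        simp only [Finset.mem_insert, Finset.mem_singleton] at hk
        push_neg at hk
        have h2 : ¬((k : ℕ) + 1 = ((⟨m + 1, hi⟩ : Fin n) : ℕ)) := by
          intro h
          exact hk.1 (Fin.ext (by simpa using Nat.succ_injective h))
        rw [Lb, if_neg hk.2, if_neg h2, zero_mul]
      exact (Finset.sum_subset (Finset.subset_univ _) hsub).symm.trans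
        (Finset.sum_pair hne)
    rw [hsum,
      show Lb A (⟨m + 1, hi⟩ : Fin n) ⟨m + 1, hi⟩ = 1 from if_pos rfl, one_mul,
      show Lb A (⟨m + 1, hi⟩ : Fin n) ⟨m, hm⟩ = -(Cm A m * (Cm A (m + 1))⁻¹) from by
        rw [Lb, if_neg hne, if_pos rfl]]
    rcases eq_or_ne j ⟨m + 1, hi⟩ with hj | hj
    · subst hj
      rw [show Ub A (⟨m, hm⟩ : Fin n) ⟨m + 1, hi⟩ = -1 from by
          rw [Ub, if_neg (Ne.symm hne), if_pos rfl],
        show Ub A (⟨m + 1, hi⟩ : Fin n) ⟨m + 1, hi⟩ = Cm A (m + 1 + 1) * (Cm A (m + 1))⁻¹ from by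
          rw [Ub, if_pos rfl],
        Dblk, if_pos rfl]
      rw [mul_neg_one, neg_neg, ← add_mul]
      have hcomb : Cm A m + Cm A (m + 2) = A (m + 1) * Cm A (m + 1) := by
        rw [Cm_rec]; abel
      rw [show m + 1 + 1 = m + 2 from rfl, hcomb, mul_assoc,
        Matrix.mul_nonsing_inv _ (hinv (m + 1) hi), mul_one]
    · by_cases hj2 : (j : ℕ) = m
      · have hj' : j = ⟨m, hm⟩ := Fin.ext hj2
        subst hj'
        rw [show Ub A (⟨m, hm⟩ : Fin n) ⟨m, hm⟩ = Cm A (m + 1) * (Cm A m)⁻¹ from by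
            rw [Ub, if_pos rfl],
          show Ub A (⟨m + 1, hi⟩ : Fin n) ⟨m, hm⟩ = 0 from by
            rw [Ub, if_neg hne, if_neg (by simp only [Fin.val_mk]; omega)],
          Dblk, if_neg (Ne.symm hj), if_pos (Or.inr rfl), add_zero]
        have h1 : Cm A m * (Cm A (m + 1))⁻¹ * (Cm A (m + 1) * (Cm A m)⁻¹) = 1 := by
          rw [mul_assoc, ← mul_assoc ((Cm A (m + 1))⁻¹),
            Matrix.nonsing_inv_mul _ (hinv (m + 1) hi), one_mul,
            Matrix.mul_nonsing_inv _ (hinv m hm)]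
        rw [neg_mul, h1]
      · have hUb1 : Ub A (⟨m, hm⟩ : Fin n) j = 0 := by
          rw [Ub, if_neg (fun h => hj2 (by rw [h])), if_neg (fun h => hj (Fin.ext (by simp only [Fin.val_mk] at h ⊢; omega)))]
        rw [hUb1, mul_zero, zero_add, Ub, Dblk, if_neg hj, if_neg (Ne.symm hj)]
        by_cases h3 : ((⟨m + 1, hi⟩ : Fin n) : ℕ) + 1 = (j : ℕ)
        · rw [if_pos h3, if_pos (Or.inl h3)]
        · rw [if_neg h3, if_neg (by
            rintro (h | h)
            · exact h3 h
            · exact hj (Fin.ext (by simp only [Fin.val_mk] at h ⊢; omega)))]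

theorem key_det {n : ℕ} (A : ℕ → Matrix (Fin d) (Fin d) R)
    (hinv : ∀ k < n, IsUnit ((Cm A k).det)) :
    (Dmat A n).det = (Cm A n).det := by
  have hLU : Dmat A n
      = (Matrix.of fun p q : Fin n × Fin d => Lb A p.1 q.1 p.2 q.2) *
        (Matrix.of fun p q : Fin n × Fin d => Ub A p.1 q.1 p.2 q.2) := by
    ext p q
    rw [Matrix.mul_apply, Fintype.sum_prod_type]
    show Dblk A p.1 q.1 p.2 q.2 = _
    rw [← LU_blk A hinv p.1 q.1, Matrix.sum_apply]
    refine Finset.sum_congr rfl fun u _ => ?_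
    rw [Matrix.mul_apply]
    rfl
  have hdetL : (Matrix.of fun p q : Fin n × Fin d => Lb A p.1 q.1 p.2 q.2).det = 1 := by
    rw [← Matrix.det_transpose]
    have ht : (Matrix.of fun p q : Fin n × Fin d => Lb A p.1 q.1 p.2 q.2)ᵀ
        = Matrix.of fun p q : Fin n × Fin d => (Lb A q.1 p.1)ᵀ p.2 q.2 := rfl
    rw [ht, det_blocks (fun i j => (Lb A j i)ᵀ) (fun i j hji => by
      show (Lb A j i)ᵀ = 0
      rw [show Lb A j i = 0 from by
        rw [Lb, if_neg (Fin.ne_of_val_ne (by omega : (i : ℕ) ≠ (j : ℕ))),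
          if_neg (by omega)], Matrix.transpose_zero])]
    refine Finset.prod_eq_one fun i _ => ?_
    rw [show Lb A i i = 1 from if_pos rfl, Matrix.transpose_one, Matrix.det_one]
  have hdetU : (Matrix.of fun p q : Fin n × Fin d => Ub A p.1 q.1 p.2 q.2).det
      = ∏ i : Fin n, (Ub A i i).det :=
    det_blocks (Ub A) (fun i j hji => by
      rw [Ub, if_neg (Fin.ne_of_val_ne (by omega : (j : ℕ) ≠ (i : ℕ))), if_neg (by omega)])
  have htel : ∀ m, m ≤ n →
      (∏ k ∈ Finset.range m, (Cm A (k + 1) * (Cm A k)⁻¹).det) = (Cm A m).det := by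
    intro m
    induction m with
    | zero => simp [Cm_zero]
    | succ m ih =>
      intro hm
      rw [Finset.prod_range_succ, ih (by omega), Matrix.det_mul, Matrix.det_nonsing_inv,
        mul_comm ((Cm A (m + 1)).det), ← mul_assoc,
        Ring.mul_inverse_cancel _ (hinv m (by omega)), one_mul]
  rw [hLU, Matrix.det_mul, hdetL, hdetU, one_mul]
  rw [Finset.prod_congr rfl (fun i (_ : i ∈ Finset.univ) => by
    rw [show Ub A i i = Cm A ((i : ℕ) + 1) * (Cm A (i : ℕ))⁻¹ from if_pos rfl])]
  rw [Fin.prod_univ_eq_prod_range (fun k => (Cm A (k + 1) * (Cm A k)⁻¹).det) n]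
  exact htel n le_rfl

def Qprod {M : Type*} [Monoid M] (g : ℕ → M) : ℕ → M
  | 0 => 1
  | k + 1 => g k * Qprod g k

lemma Qprod_shift {M : Type*} [Monoid M] (g : ℕ → M) (n : ℕ) :
    Qprod (fun k => g (k + 1)) n * g 0 = Qprod g (n + 1) := by
  induction n with
  | zero => show 1 * g 0 = g 0 * 1; rw [one_mul, mul_one]
  | succ n ih =>
    show (g (n + 1) * Qprod (fun k => g (k + 1)) n) * g 0 = _
    rw [mul_assoc, ih]
    rfl

lemma finRange_reverse_prod {M : Type*} [Monoid M] (n : ℕ) (g : ℕ → M) :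
    ((List.finRange n).reverse.map fun i : Fin n => g (i : ℕ)).prod = Qprod g n := by
  induction n generalizing g with
  | zero => simp [Qprod]
  | succ n ih =>
    have h1 : ((List.finRange (n + 1)).reverse.map fun i : Fin (n + 1) => g (i : ℕ))
        = ((List.finRange n).reverse.map fun i : Fin n => g ((i : ℕ) + 1)) ++ [g 0] := by
      rw [List.finRange_succ, List.reverse_cons, List.map_append]
      congr 1
      rw [List.map_reverse, List.map_map, List.map_reverse]
      have hfe : ((fun i : Fin (n + 1) => g ↑i) ∘ Fin.succ) = fun i : Fin n => g (↑i + 1) := by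
        funext i
        rfl
      rw [hfe]
    rw [h1, List.prod_append, List.prod_singleton, ih (fun k => g (k + 1))]
    exact Qprod_shift g n

lemma Qprod_fromBlocks (A : ℕ → Matrix (Fin d) (Fin d) R) (n : ℕ) :
    Qprod (fun k => Matrix.fromBlocks (A k) (-1) 1 0) n
      = Matrix.fromBlocks (contRec A (1, 0) n).1 (contRec A (0, 1) n).1
          (contRec A (1, 0) n).2 (contRec A (0, 1) n).2 := by
  induction n with
  | zero =>
    show (1 : Matrix (Fin d ⊕ Fin d) (Fin d ⊕ Fin d) R) = Matrix.fromBlocks 1 0 0 1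
    exact Matrix.fromBlocks_one.symm
  | succ n ih =>
    show Matrix.fromBlocks (A n) (-1) 1 0 * Qprod _ n = _
    rw [ih, Matrix.fromBlocks_multiply]
    have e1 : A n * (contRec A (1, 0) n).1 + (-1) * (contRec A (1, 0) n).2
        = (contRec A (1, 0) (n + 1)).1 := by
      rw [neg_one_mul, ← sub_eq_add_neg]; rfl
    have e2 : A n * (contRec A (0, 1) n).1 + (-1) * (contRec A (0, 1) n).2
        = (contRec A (0, 1) (n + 1)).1 := by
      rw [neg_one_mul, ← sub_eq_add_neg]; rfl
    have e3 : (1 : Matrix (Fin d) (Fin d) R) * (contRec A (1, 0) n).1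
        + 0 * (contRec A (1, 0) n).2 = (contRec A (1, 0) (n + 1)).2 := by
      rw [one_mul, zero_mul, add_zero]; rfl
    have e4 : (1 : Matrix (Fin d) (Fin d) R) * (contRec A (0, 1) n).1
        + 0 * (contRec A (0, 1) n).2 = (contRec A (0, 1) (n + 1)).2 := by
      rw [one_mul, zero_mul, add_zero]; rfl
    rw [e1, e2, e3, e4]

section Map

variable {S : Type*} [CommRing S]

lemma contRec_map (f : R →+* S) (A : ℕ → Matrix (Fin d) (Fin d) R) (n : ℕ) :
    contRec (fun k => (A k).map f) (1, 0) n
      = ((contRec A (1, 0) n).1.map f, (contRec A (1, 0) n).2.map f) := by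
  induction n with
  | zero =>
    show ((1 : Matrix (Fin d) (Fin d) S), (0 : Matrix (Fin d) (Fin d) S))
        = ((1 : Matrix (Fin d) (Fin d) R).map f, (0 : Matrix (Fin d) (Fin d) R).map f)
    rw [Matrix.map_one f f.map_zero f.map_one, Matrix.map_zero f f.map_zero]
  | succ n ih =>
    show ((A n).map f * (contRec _ (1, 0) n).1 - (contRec _ (1, 0) n).2,
        (contRec _ (1, 0) n).1) = _
    rw [ih]
    refine Prod.ext ?_ ?_
    · show (A n).map f * (contRec A (1, 0) n).1.map f - (contRec A (1, 0) n).2.map f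
        = ((contRec A (1, 0) (n + 1)).1).map f
      rw [← Matrix.map_mul, ← Matrix.map_sub _ (map_sub f)]
      rfl
    · rfl

lemma Cm_map (f : R →+* S) (A : ℕ → Matrix (Fin d) (Fin d) R) (n : ℕ) :
    Cm (fun k => (A k).map f) n = (Cm A n).map f :=
  congrArg Prod.fst (contRec_map f A n)

lemma det_map' {ι : Type*} [Fintype ι] [DecidableEq ι] (f : R →+* S) (M : Matrix ι ι R) :
    f M.det = (M.map f).det := by
  rw [RingHom.map_det, RingHom.mapMatrix_apply]

lemma Dmat_map (f : R →+* S) (A : ℕ → Matrix (Fin d) (Fin d) R) (n : ℕ) :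
    (Dmat A n).map f = Dmat (fun k => (A k).map f) n := by
  ext p q
  show f (Dblk A p.1 q.1 p.2 q.2) = Dblk (fun k => (A k).map f) p.1 q.1 p.2 q.2
  rw [Dblk, Dblk]
  split_ifs with h1 h2
  · rfl
  · simp [Matrix.neg_apply, Matrix.one_apply, apply_ite f]
  · simp

end Map

lemma contRec_two (d k : ℕ) :
    contRec (fun _ : ℕ => ((2 : ℝ) • 1 : Matrix (Fin d) (Fin d) ℝ)) (1, 0) k
      = (((k + 1 : ℕ) : ℝ) • 1, ((k : ℕ) : ℝ) • 1) := by
  induction k with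
  | zero =>
    show ((1 : Matrix (Fin d) (Fin d) ℝ), (0 : Matrix (Fin d) (Fin d) ℝ)) = _
    norm_num
  | succ k ih =>
    show ((2 : ℝ) • 1 * (contRec _ (1, 0) k).1 - (contRec _ (1, 0) k).2,
        (contRec _ (1, 0) k).1) = _
    rw [ih]
    refine Prod.ext ?_ rfl
    show (2 : ℝ) • 1 * (((k + 1 : ℕ) : ℝ) • 1) - ((k : ℕ) : ℝ) • 1
        = ((k + 1 + 1 : ℕ) : ℝ) • 1
    rw [Matrix.smul_mul, Matrix.mul_smul, one_mul, smul_smul, ← sub_smul]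
    congr 1
    push_cast
    ring

theorem generic_det (d n : ℕ) :
    (Dmat (fun k => Matrix.of fun x y : Fin d =>
        (MvPolynomial.X (k, x, y) : MvPolynomial (ℕ × Fin d × Fin d) ℝ)) n).det
      = (Cm (fun k => Matrix.of fun x y : Fin d =>
        (MvPolynomial.X (k, x, y) : MvPolynomial (ℕ × Fin d × Fin d) ℝ)) n).det := by
  classical
  set R' := MvPolynomial (ℕ × Fin d × Fin d) ℝ with hR'
  set K := FractionRing R' with hK
  set A : ℕ → Matrix (Fin d) (Fin d) R' :=
    fun k => Matrix.of fun x y => MvPolynomial.X (k, x, y) with hA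
  set φ : R' →+* K := algebraMap R' K with hφ
  have hinj : Function.Injective φ := IsFractionRing.injective R' K
  have hnz : ∀ k, (Cm A k).det ≠ 0 := by
    intro k hzero
    set ψ : R' →+* ℝ :=
      (MvPolynomial.eval fun s : ℕ × Fin d × Fin d =>
        if s.2.1 = s.2.2 then (2 : ℝ) else 0) with hψ
    have hmap : (fun j => (A j).map ψ)
        = fun _ : ℕ => ((2 : ℝ) • 1 : Matrix (Fin d) (Fin d) ℝ) := by
      funext j
      ext x y
      show ψ (MvPolynomial.X (j, x, y)) = ((2 : ℝ) • 1 : Matrix (Fin d) (Fin d) ℝ) x y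
      rw [hψ, MvPolynomial.eval_X]
      by_cases h : x = y <;> simp [h, Matrix.one_apply]
    have h1 : ψ ((Cm A k).det) = (Cm (fun j => (A j).map ψ) k).det := by
      rw [Cm_map ψ A k]
      exact det_map' ψ _
    rw [hmap, show Cm (fun _ : ℕ => ((2 : ℝ) • 1 : Matrix (Fin d) (Fin d) ℝ)) k
        = ((k + 1 : ℕ) : ℝ) • 1 from congrArg Prod.fst (contRec_two d k),
      Matrix.det_smul, Matrix.det_one, mul_one, Fintype.card_fin, hzero, map_zero] at h1
    exact pow_ne_zero d (by positivity : (((k + 1 : ℕ) : ℝ)) ≠ 0) h1.symm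
  have hinvK : ∀ k < n, IsUnit ((Cm (fun j => (A j).map φ) k).det) := by
    intro k _
    rw [Cm_map, ← _root_.det_map']
    refine isUnit_iff_ne_zero.mpr ?_
    intro h
    exact hnz k (hinj (by rw [h, map_zero]))
  have hkey := key_det (fun j => (A j).map φ) hinvK
  rw [← Dmat_map, Cm_map, ← _root_.det_map', ← _root_.det_map'] at hkey
  exact hinj hkey

end Aux

theorem stmt4 {d n : ℕ} (A : Fin n → Matrix (Fin d) (Fin d) ℝ) :
    let D : Matrix (Fin n × Fin d) (Fin n × Fin d) ℝ :=
      Matrix.of fun p q =>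
        if p.1 = q.1 then A p.1 p.2 q.2
        else if (p.1 : ℕ) + 1 = (q.1 : ℕ) ∨ (q.1 : ℕ) + 1 = (p.1 : ℕ) then
          (-(1 : Matrix (Fin d) (Fin d) ℝ)) p.2 q.2
        else 0
    let Mprod : Matrix (Fin d ⊕ Fin d) (Fin d ⊕ Fin d) ℝ :=
      (((List.finRange n).reverse.map fun i =>
        Matrix.fromBlocks (A i) (-1) 1 0).prod)
    D.det = (Matrix.toBlocks₁₁ Mprod).det := by
  intro D Mprod
  classical
  set A' : ℕ → Matrix (Fin d) (Fin d) ℝ :=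
    fun k => if h : k < n then A ⟨k, h⟩ else 1 with hA'
  have hA'eq : ∀ i : Fin n, A' (i : ℕ) = A i := by
    intro i
    simp only [hA', i.isLt, dif_pos]
  have hD : D = Dmat A' n := by
    ext p q
    show (if p.1 = q.1 then A p.1 p.2 q.2
        else if (p.1 : ℕ) + 1 = (q.1 : ℕ) ∨ (q.1 : ℕ) + 1 = (p.1 : ℕ) then
          (-(1 : Matrix (Fin d) (Fin d) ℝ)) p.2 q.2
        else 0) = Dblk A' p.1 q.1 p.2 q.2
    rw [Dblk]
    split_ifs with h1 h2
    · rw [hA'eq p.1]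
    · rfl
    · rfl
  set g : ℕ → Matrix (Fin d ⊕ Fin d) (Fin d ⊕ Fin d) ℝ :=
    fun k => Matrix.fromBlocks (A' k) (-1) 1 0 with hg
  have hM : Mprod = Qprod g n := by
    have hfe : (fun i : Fin n => (Matrix.fromBlocks (A i) (-1) 1 0 :
          Matrix (Fin d ⊕ Fin d) (Fin d ⊕ Fin d) ℝ))
        = fun i : Fin n => g (i : ℕ) := by
      funext i
      show _ = Matrix.fromBlocks (A' (i : ℕ)) (-1) 1 0
      rw [hA'eq]
    show ((List.finRange n).reverse.map fun i => (Matrix.fromBlocks (A i) (-1) 1 0 :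
        Matrix (Fin d ⊕ Fin d) (Fin d ⊕ Fin d) ℝ)).prod = _
    rw [hfe]
    exact finRange_reverse_prod n _
  have hTB : Matrix.toBlocks₁₁ (Qprod g n) = Cm A' n := by
    rw [Qprod_fromBlocks]
    exact Matrix.toBlocks_fromBlocks₁₁ _ _ _ _
  rw [hD, hM, hTB]
  set Ag : ℕ → Matrix (Fin d) (Fin d) (MvPolynomial (ℕ × Fin d × Fin d) ℝ) :=
    fun k => Matrix.of fun x y => MvPolynomial.X (k, x, y) with hAg'
  set ψ : MvPolynomial (ℕ × Fin d × Fin d) ℝ →+* ℝ :=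
    (MvPolynomial.eval fun s : ℕ × Fin d × Fin d => A' s.1 s.2.1 s.2.2) with hψ
  have hAg : (fun k => (Ag k).map ψ) = A' := by
    funext k
    ext x y
    show ψ (MvPolynomial.X (k, x, y)) = A' k x y
    rw [hψ, MvPolynomial.eval_X]
  calc (Dmat A' n).det
      = ((Dmat Ag n).map ψ).det := by rw [Dmat_map, hAg]
    _ = ψ ((Dmat Ag n).det) := (det_map' ψ _).symm
    _ = ψ ((Cm Ag n).det) := by rw [generic_det]
    _ = ((Cm Ag n).map ψ).det := det_map' ψ _
    _ = (Cm A' n).det := by rw [← Cm_map, hAg]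
end

section
/- (Poincaré separation theorem) Let A be an n×n real symmetric matrix, let u₁,…,u_r be an orthonormal family in ℝ^n with r < n, and let B be the r×r matrix with entries B_{ij} = u_iᵀ A u_j. If λ₁(A) ≤ … ≤ λ_n(A) are the eigenvalues of A and λ₁(B) ≤ … ≤ λ_r(B) those of B, then λ_k(A) ≤ λ_k(B) ≤ λ_{k+n−r}(A) for all 1 ≤ k ≤ r. -/
open Matrix

open Finset Module Submodule

private lemma pcr_sum_dot {m : ℕ} {ι : Type*} (s : Finset ι) (f : ι → Fin m → ℝ)
    (y : Fin m → ℝ) : (∑ i ∈ s, f i) ⬝ᵥ y = ∑ i ∈ s, f i ⬝ᵥ y := by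
  simp only [dotProduct, Finset.sum_apply, Finset.sum_mul]
  exact Finset.sum_comm

private lemma pcr_dot_sum {m : ℕ} {ι : Type*} (s : Finset ι) (x : Fin m → ℝ)
    (f : ι → Fin m → ℝ) : x ⬝ᵥ (∑ i ∈ s, f i) = ∑ i ∈ s, x ⬝ᵥ f i := by
  simp only [dotProduct, Finset.sum_apply, Finset.mul_sum]
  exact Finset.sum_comm

private lemma pcr_li_ortho {m : ℕ} {ι : Type*} [Fintype ι] (v : Fin m → Fin m → ℝ)
    (hv : ∀ i j, v i ⬝ᵥ v j = if i = j then (1:ℝ) else 0)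
    (g : ι → Fin m) (hg : Function.Injective g) :
    LinearIndependent ℝ (fun i => v (g i)) := by
  rw [Fintype.linearIndependent_iff]
  intro a ha j
  have h := congrArg (fun z => z ⬝ᵥ v (g j)) ha
  simp only [pcr_sum_dot, smul_dotProduct, hv, smul_eq_mul, zero_dotProduct] at h
  simp only [mul_ite, mul_one, mul_zero] at h
  rw [Finset.sum_eq_single j (fun b _ hb => if_neg (fun hh => hb (hg hh))) (by simp),
    if_pos rfl] at h
  exact h

private lemma pcr_quad_forms {m : ℕ} (M : Matrix (Fin m) (Fin m) ℝ) (μ : Fin m → ℝ)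
    (v : Fin m → Fin m → ℝ)
    (hv : ∀ i j, v i ⬝ᵥ v j = if i = j then (1:ℝ) else 0)
    (heig : ∀ i, M *ᵥ v i = μ i • v i)
    {ι : Type*} [Fintype ι] (g : ι → Fin m) (hg : Function.Injective g) (a : ι → ℝ) :
    (∑ i, a i • v (g i)) ⬝ᵥ (M *ᵥ ∑ i, a i • v (g i)) = (∑ i, μ (g i) * a i ^ 2)
    ∧ (∑ i, a i • v (g i)) ⬝ᵥ (∑ i, a i • v (g i)) = ∑ i, a i ^ 2 := by
  have h2 : M *ᵥ (∑ i, a i • v (g i)) = ∑ i, a i • μ (g i) • v (g i) := by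
    have h : ∀ x : Fin m → ℝ, M *ᵥ x = M.mulVecLin x := fun _ => rfl
    rw [h, map_sum]
    simp only [LinearMap.map_smul, mulVecLin_apply, heig]
  have key : ∀ w : ι → ℝ,
      (∑ i, a i • v (g i)) ⬝ᵥ (∑ i, w i • v (g i)) = ∑ i, a i * w i := by
    intro w
    rw [pcr_sum_dot]
    refine Finset.sum_congr rfl fun i _ => ?_
    rw [pcr_dot_sum, Finset.sum_eq_single i]
    · simp [smul_dotProduct, dotProduct_smul, hv, mul_comm]
    · intro b _ hb
      have hne : g i ≠ g b := fun h => hb (hg h).symm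
      simp [smul_dotProduct, dotProduct_smul, hv, hne]
    · simp
  constructor
  · rw [h2]
    rw [show (∑ i, a i • μ (g i) • v (g i)) = ∑ i, (a i * μ (g i)) • v (g i) by
      simp [mul_smul]]
    rw [key]
    exact Finset.sum_congr rfl fun i _ => by ring
  · rw [key]
    exact Finset.sum_congr rfl fun i _ => by ring

private lemma pcr_exists_common {n r p q : ℕ} (U : Matrix (Fin n) (Fin r) ℝ)
    (hUinj : Function.Injective U.mulVecLin)
    (vA : Fin n → Fin n → ℝ)
    (hvA : ∀ i j, vA i ⬝ᵥ vA j = if i = j then (1:ℝ) else 0)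
    (gA : Fin q → Fin n) (hgA : Function.Injective gA)
    (vB : Fin r → Fin r → ℝ)
    (hvB : ∀ i j, vB i ⬝ᵥ vB j = if i = j then (1:ℝ) else 0)
    (gB : Fin p → Fin r) (hgB : Function.Injective gB)
    (hpq : n + 1 ≤ p + q) :
    ∃ (y : Fin r → ℝ) (aA : Fin q → ℝ) (aB : Fin p → ℝ),
      y ≠ 0 ∧ y = ∑ j, aB j • vB (gB j) ∧ U *ᵥ y = ∑ j, aA j • vA (gA j) := by
  set WB : Submodule ℝ (Fin r → ℝ) := span ℝ (Set.range fun j => vB (gB j)) with hWB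
  set V1 : Submodule ℝ (Fin n → ℝ) := WB.map U.mulVecLin with hV1
  set V2 : Submodule ℝ (Fin n → ℝ) := span ℝ (Set.range fun j => vA (gA j)) with hV2
  have hfB : finrank ℝ WB = p := by
    rw [hWB, finrank_span_eq_card (pcr_li_ortho vB hvB gB hgB), Fintype.card_fin]
  have hf1 : finrank ℝ V1 = p := by
    rw [hV1, ← (Submodule.equivMapOfInjective U.mulVecLin hUinj WB).finrank_eq, hfB]
  have hf2 : finrank ℝ V2 = q := by
    rw [hV2, finrank_span_eq_card (pcr_li_ortho vA hvA gA hgA), Fintype.card_fin]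
  have hsup : finrank ℝ ↥(V1 ⊔ V2) ≤ n := by
    have := Submodule.finrank_le (V1 ⊔ V2)
    rwa [Module.finrank_fin_fun] at this
  have hinf : 0 < finrank ℝ ↥(V1 ⊓ V2) := by
    have := Submodule.finrank_sup_add_finrank_inf_eq V1 V2
    omega
  have hne : V1 ⊓ V2 ≠ ⊥ := by
    intro h
    rw [h, finrank_bot] at hinf
    exact lt_irrefl 0 hinf
  obtain ⟨x, hx, hx0⟩ := Submodule.exists_mem_ne_zero_of_ne_bot hne
  obtain ⟨hx1, hx2⟩ := Submodule.mem_inf.mp hx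
  obtain ⟨y, hyWB, hyx⟩ := Submodule.mem_map.mp hx1
  obtain ⟨aB, haB⟩ := (mem_span_range_iff_exists_fun ℝ).mp hyWB
  obtain ⟨aA, haA⟩ := (mem_span_range_iff_exists_fun ℝ).mp hx2
  refine ⟨y, aA, aB, ?_, haB.symm, ?_⟩
  · rintro rfl
    rw [map_zero] at hyx
    exact hx0 hyx.symm
  · rw [show U *ᵥ y = U.mulVecLin y from rfl, hyx, haA]

theorem stmt5 {n r : ℕ} (hr : r < n)
    (A : Matrix (Fin n) (Fin n) ℝ) (hA : A.IsHermitian)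
    (U : Matrix (Fin n) (Fin r) ℝ) (hU : Uᵀ * U = 1)
    (hB : (Uᵀ * A * U).IsHermitian)
    (lamA : Fin n → ℝ) (hlamA : Monotone lamA)
    (σA : Equiv.Perm (Fin n)) (hσA : lamA = hA.eigenvalues ∘ σA)
    (lamB : Fin r → ℝ) (hlamB : Monotone lamB)
    (σB : Equiv.Perm (Fin r)) (hσB : lamB = hB.eigenvalues ∘ σB) :
    ∀ k : Fin r, lamA (Fin.castLE hr.le k) ≤ lamB k ∧
      lamB k ≤ lamA ⟨(k : ℕ) + (n - r), by have := k.isLt; omega⟩ := by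
  intro k
  set B : Matrix (Fin r) (Fin r) ℝ := Uᵀ * A * U with hBdef
  -- eigenvector families
  set eA : Fin n → Fin n → ℝ := fun i => (hA.eigenvectorBasis (σA i) : Fin n → ℝ) with heA
  set eB : Fin r → Fin r → ℝ := fun i => (hB.eigenvectorBasis (σB i) : Fin r → ℝ) with heB
  have hvA : ∀ i j, eA i ⬝ᵥ eA j = if i = j then (1:ℝ) else 0 := by
    intro i j
    have h := hA.eigenvectorBasis.orthonormal
    rw [orthonormal_iff_ite] at h
    have h2 := h (σA i) (σA j)
    rw [EuclideanSpace.inner_eq_star_dotProduct, star_trivial, dotProduct_comm] at h2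
    simpa [heA, EquivLike.apply_eq_iff_eq] using h2
  have hvB : ∀ i j, eB i ⬝ᵥ eB j = if i = j then (1:ℝ) else 0 := by
    intro i j
    have h := hB.eigenvectorBasis.orthonormal
    rw [orthonormal_iff_ite] at h
    have h2 := h (σB i) (σB j)
    rw [EuclideanSpace.inner_eq_star_dotProduct, star_trivial, dotProduct_comm] at h2
    simpa [heB, EquivLike.apply_eq_iff_eq] using h2
  have heigA : ∀ i, A *ᵥ eA i = lamA i • eA i := by
    intro i
    have := hA.mulVec_eigenvectorBasis (σA i)
    rw [hσA]
    exact this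
  have heigB : ∀ i, B *ᵥ eB i = lamB i • eB i := by
    intro i
    have := hB.mulVec_eigenvectorBasis (σB i)
    rw [hσB]
    exact this
  -- transfer identities
  have hUU : ∀ z : Fin r → ℝ, ∀ w : Fin n → ℝ, z ⬝ᵥ (Uᵀ *ᵥ w) = (U *ᵥ z) ⬝ᵥ w := by
    intro z w
    rw [dotProduct_mulVec, vecMul_transpose]
  have tA : ∀ y : Fin r → ℝ, (U *ᵥ y) ⬝ᵥ (A *ᵥ (U *ᵥ y)) = y ⬝ᵥ (B *ᵥ y) := by
    intro y
    rw [hBdef, show (Uᵀ * A * U) *ᵥ y = Uᵀ *ᵥ (A *ᵥ (U *ᵥ y)) by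
      rw [← mulVec_mulVec, ← mulVec_mulVec], hUU]
  have tN : ∀ y : Fin r → ℝ, (U *ᵥ y) ⬝ᵥ (U *ᵥ y) = y ⬝ᵥ y := by
    intro y
    rw [← hUU y (U *ᵥ y), mulVec_mulVec, hU, one_mulVec]
  have hUinj : Function.Injective U.mulVecLin := by
    apply Function.LeftInverse.injective (g := fun w => Uᵀ *ᵥ w)
    intro y
    simp only [mulVecLin_apply, mulVec_mulVec, hU, one_mulVec]
  have kr := k.isLt
  constructor
  · -- lamA k ≤ lamB k
    set gB : Fin (k.1 + 1) → Fin r := fun j => ⟨j.1, by omega⟩ with hgBdef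
    set gA : Fin (n - k.1) → Fin n := fun j => ⟨j.1 + k.1, by omega⟩ with hgAdef
    have hgB : Function.Injective gB := by
      intro a b hab
      simpa [hgBdef, Fin.ext_iff] using hab
    have hgA : Function.Injective gA := by
      intro a b hab
      simp only [hgAdef, Fin.mk.injEq] at hab
      exact Fin.ext (by omega)
    obtain ⟨y, aA, aB, hy0, hyB, hyA⟩ := pcr_exists_common U hUinj eA hvA gA hgA
      eB hvB gB hgB (by omega)
    have qA := pcr_quad_forms A lamA eA hvA heigA gA hgA aA
    have qB := pcr_quad_forms B lamB eB hvB heigB gB hgB aB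
    rw [← hyA] at qA
    rw [← hyB] at qB
    have lower : lamA (Fin.castLE hr.le k) * ((U *ᵥ y) ⬝ᵥ (U *ᵥ y))
        ≤ (U *ᵥ y) ⬝ᵥ (A *ᵥ (U *ᵥ y)) := by
      rw [qA.1, qA.2, Finset.mul_sum]
      refine Finset.sum_le_sum fun j _ => ?_
      refine mul_le_mul_of_nonneg_right (hlamA ?_) (sq_nonneg _)
      rw [Fin.le_def]
      simp [hgAdef, Fin.castLE]
    have upper : y ⬝ᵥ (B *ᵥ y) ≤ lamB k * (y ⬝ᵥ y) := by
      rw [qB.1, qB.2, Finset.mul_sum]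
      refine Finset.sum_le_sum fun j _ => ?_
      refine mul_le_mul_of_nonneg_right (hlamB ?_) (sq_nonneg _)
      rw [Fin.le_def]
      simp only [hgBdef]
      omega
    have hpos : 0 < y ⬝ᵥ y := by
      rcases (Finset.sum_nonneg (fun i _ => mul_self_nonneg (y i))).lt_or_eq with h | h
      · exact h
      · exact absurd ((dotProduct_self_eq_zero).mp h.symm) hy0
    have chain : lamA (Fin.castLE hr.le k) * (y ⬝ᵥ y) ≤ lamB k * (y ⬝ᵥ y) := by
      calc lamA (Fin.castLE hr.le k) * (y ⬝ᵥ y)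
          = lamA (Fin.castLE hr.le k) * ((U *ᵥ y) ⬝ᵥ (U *ᵥ y)) := by rw [tN]
        _ ≤ (U *ᵥ y) ⬝ᵥ (A *ᵥ (U *ᵥ y)) := lower
        _ = y ⬝ᵥ (B *ᵥ y) := tA y
        _ ≤ lamB k * (y ⬝ᵥ y) := upper
    exact le_of_mul_le_mul_right (by simpa [mul_comm] using chain) hpos
  · -- lamB k ≤ lamA (k + (n - r))
    set gB : Fin (r - k.1) → Fin r := fun j => ⟨j.1 + k.1, by omega⟩ with hgBdef
    set gA : Fin (k.1 + (n - r) + 1) → Fin n := fun j => ⟨j.1, by omega⟩ with hgAdef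
    have hgB : Function.Injective gB := by
      intro a b hab
      simp only [hgBdef, Fin.mk.injEq] at hab
      exact Fin.ext (by omega)
    have hgA : Function.Injective gA := by
      intro a b hab
      simpa [hgAdef, Fin.ext_iff] using hab
    obtain ⟨y, aA, aB, hy0, hyB, hyA⟩ := pcr_exists_common U hUinj eA hvA gA hgA
      eB hvB gB hgB (by omega)
    have qA := pcr_quad_forms A lamA eA hvA heigA gA hgA aA
    have qB := pcr_quad_forms B lamB eB hvB heigB gB hgB aB
    rw [← hyA] at qA
    rw [← hyB] at qB
    have lower : lamB k * (y ⬝ᵥ y) ≤ y ⬝ᵥ (B *ᵥ y) := by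
      rw [qB.1, qB.2, Finset.mul_sum]
      refine Finset.sum_le_sum fun j _ => ?_
      refine mul_le_mul_of_nonneg_right (hlamB ?_) (sq_nonneg _)
      rw [Fin.le_def]
      simp only [hgBdef]
      omega
    have upper : (U *ᵥ y) ⬝ᵥ (A *ᵥ (U *ᵥ y))
        ≤ lamA ⟨(k : ℕ) + (n - r), by omega⟩ * ((U *ᵥ y) ⬝ᵥ (U *ᵥ y)) := by
      rw [qA.1, qA.2, Finset.mul_sum]
      refine Finset.sum_le_sum fun j _ => ?_
      refine mul_le_mul_of_nonneg_right (hlamA ?_) (sq_nonneg _)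
      rw [Fin.le_def]
      simp only [hgAdef]
      omega
    have hpos : 0 < y ⬝ᵥ y := by
      rcases (Finset.sum_nonneg (fun i _ => mul_self_nonneg (y i))).lt_or_eq with h | h
      · exact h
      · exact absurd ((dotProduct_self_eq_zero).mp h.symm) hy0
    have chain : lamB k * (y ⬝ᵥ y) ≤ lamA ⟨(k : ℕ) + (n - r), by omega⟩ * (y ⬝ᵥ y) := by
      calc lamB k * (y ⬝ᵥ y) ≤ y ⬝ᵥ (B *ᵥ y) := lower
        _ = (U *ᵥ y) ⬝ᵥ (A *ᵥ (U *ᵥ y)) := (tA y).symm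
        _ ≤ lamA ⟨(k : ℕ) + (n - r), by omega⟩ * ((U *ᵥ y) ⬝ᵥ (U *ᵥ y)) := upper
        _ = lamA ⟨(k : ℕ) + (n - r), by omega⟩ * (y ⬝ᵥ y) := by rw [tN]
    exact le_of_mul_le_mul_right (by simpa [mul_comm] using chain) hpos
end
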